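/- arXiv:1101.1251 — 2 statements merged into one kernel-verified Lean document; each statement's English description precedes it below -/
import Mathlib

section
/- If f in the Pick class satisfies f(z) = a^0 + o(z-x) as z → x nontangentially for some x ∈ ℝ and a^0 ∈ ℝ (i.e. f has nontangential limit a^0 and angular derivative 0 at x), then f is the constant function a^0. -/
open Complex Filter Finset Metric Set
open ComplexConjugate Topology

noncomputable section

/-- The open upper half-plane. -/
def UHP : Set ℂ := {z : ℂ | 0 < z.im}

/-- The Pick class: analytic functions on the upper half-plane with nonnegative
imaginary part there. -/
def IsPick (f : ℂ → ℂ) : Prop :=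
  DifferentiableOn ℂ f UHP ∧ ∀ z ∈ UHP, 0 ≤ (f z).im

/-- A nontangential approach region at `x ∈ ℝ` with aperture `K`. -/
def ntRegion (x K : ℝ) : Set ℂ := {z : ℂ | 0 < z.im ∧ ‖z - x‖ ≤ K * z.im}

/-- `f z → L` as `z → x` nontangentially in the upper half-plane. -/
def NTTendsto (f : ℂ → ℂ) (x : ℝ) (L : ℂ) : Prop :=
  ∀ K > 0, Tendsto f (nhdsWithin (x : ℂ) (ntRegion x K)) (nhds L)

/-- `r z = o((z-x)^n)` as `z → x` nontangentially. -/
def NTLittleO (r : ℂ → ℂ) (x : ℝ) (n : ℕ) : Prop :=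
  NTTendsto (fun z => r z / (z - (x : ℂ)) ^ n) x 0

/-- `f` has the pseudo-Taylor expansion of order `n` about `x` with coefficients `c`. -/
def HasPseudoTaylor (f : ℂ → ℂ) (x : ℝ) (n : ℕ) (c : ℕ → ℂ) : Prop :=
  NTLittleO (fun z => f z - ∑ j ∈ Finset.range (n + 1), c j * (z - (x : ℂ)) ^ j) x n

lemma UHP_isOpen : IsOpen UHP := isOpen_lt continuous_const Complex.continuous_im

lemma UHP_preconnected : IsPreconnected UHP := (convex_halfSpace_im_gt 0).isPreconnected

lemma sq_sub_sq_abs (z w : ℂ) :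
    ‖z - conj w‖ ^ 2 - ‖z - w‖ ^ 2 = 4 * z.im * w.im := by
  rw [Complex.sq_norm, Complex.sq_norm, Complex.normSq_apply, Complex.normSq_apply]
  simp only [Complex.sub_re, Complex.sub_im, Complex.conj_re, Complex.conj_im]
  ring

lemma abs_sub_lt_abs_sub_conj {z w : ℂ} (hz : 0 < z.im) (hw : 0 < w.im) :
    ‖z - w‖ < ‖z - conj w‖ := by
  have h := sq_sub_sq_abs z w
  nlinarith [norm_nonneg (z - w), norm_nonneg (z - conj w)]

lemma im_le_abs_sub_conj {z w : ℂ} (hz : 0 ≤ z.im) (hw : 0 ≤ w.im) :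
    z.im + w.im ≤ ‖z - conj w‖ := by
  have h1 : (z - conj w).im = z.im + w.im := by simp
  have := Complex.abs_im_le_norm (z - conj w)
  rw [h1] at this
  calc z.im + w.im ≤ |z.im + w.im| := le_abs_self _
    _ ≤ _ := this

/-- Schwarz–Pick inequality for holomorphic self-maps of the upper half-plane. -/
lemma schwarzPick {g : ℂ → ℂ} (hg : DifferentiableOn ℂ g UHP)
    (hpos : ∀ z ∈ UHP, 0 < (g z).im) {z₀ z : ℂ} (hz₀ : z₀ ∈ UHP) (hz : z ∈ UHP) :
    ‖g z - g z₀‖ * ‖z - conj z₀‖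
      ≤ ‖z - z₀‖ * ‖g z - conj (g z₀)‖ := by
  have hz₀' : 0 < z₀.im := hz₀
  have hz' : 0 < z.im := hz
  set c : ℂ → ℂ := fun u => (z₀ - u * conj z₀) / (1 - u) with hc_def
  -- c maps the unit ball into UHP
  have hc_mem : ∀ u ∈ ball (0 : ℂ) 1, c u ∈ UHP := by
    intro u hu
    rw [mem_ball_zero_iff] at hu
    have hns : Complex.normSq u < 1 := by
      rw [← Complex.sq_norm]; nlinarith [norm_nonneg u]
    have h1u : (1 : ℂ) - u ≠ 0 := by
      intro h
      have : u = 1 := by linear_combination -h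
      rw [this] at hu; simp at hu
    have hns1 : 0 < Complex.normSq (1 - u) := Complex.normSq_pos.2 h1u
    show 0 < ((z₀ - u * conj z₀) / (1 - u)).im
    rw [Complex.div_im]
    have hnum : (z₀ - u * conj z₀).im * (1 - u).re - (z₀ - u * conj z₀).re * (1 - u).im
        = z₀.im * (1 - Complex.normSq u) := by
      simp only [Complex.sub_re, Complex.sub_im, Complex.mul_re, Complex.mul_im,
        Complex.conj_re, Complex.conj_im, Complex.one_re, Complex.one_im,
        Complex.normSq_apply]
      ring
    rw [div_sub_div_same, hnum]
    exact div_pos (mul_pos hz₀' (by linarith)) hns1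
  have hc0 : c 0 = z₀ := by simp [hc_def]
  have hdiffc : DifferentiableOn ℂ c (ball 0 1) := by
    apply DifferentiableOn.div
    · exact (differentiableOn_const _).sub (differentiableOn_id.mul (differentiableOn_const _))
    · exact (differentiableOn_const _).sub differentiableOn_id
    · intro u hu
      rw [mem_ball_zero_iff] at hu
      intro h
      have : u = 1 := by linear_combination -h
      rw [this] at hu; simp at hu
  have hgc : DifferentiableOn ℂ (fun u => g (c u)) (ball 0 1) :=
    hg.comp hdiffc hc_mem
  set h : ℂ → ℂ := fun u => (g (c u) - g z₀) / (g (c u) - conj (g z₀)) with hh_def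
  have hgz₀ : 0 < (g z₀).im := hpos _ hz₀
  have hden_ne : ∀ u ∈ ball (0 : ℂ) 1, g (c u) - conj (g z₀) ≠ 0 := by
    intro u hu h0
    have h1 : (g (c u)).im = (conj (g z₀)).im := by rw [sub_eq_zero] at h0; rw [h0]
    have h2 : 0 < (g (c u)).im := hpos _ (hc_mem u hu)
    rw [Complex.conj_im] at h1
    linarith
  have hdiffh : DifferentiableOn ℂ h (ball 0 1) := by
    exact (hgc.sub (differentiableOn_const _)).div
      (hgc.sub (differentiableOn_const _)) hden_ne
  have hmaps : MapsTo h (ball 0 1) (ball 0 1) := by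
    intro u hu
    rw [mem_ball_zero_iff]
    have h2 : 0 < (g (c u)).im := hpos _ (hc_mem u hu)
    have h3 : ‖g (c u) - g z₀‖ < ‖g (c u) - conj (g z₀)‖ :=
      abs_sub_lt_abs_sub_conj h2 hgz₀
    have h4 : 0 < ‖g (c u) - conj (g z₀)‖ :=
      (norm_nonneg _).trans_lt h3
    rw [hh_def]
    simp only [norm_div]
    exact (div_lt_one h4).2 h3
  have h0 : h 0 = 0 := by simp [hh_def, hc0]
  -- now plug in u = (z - z₀)/(z - conj z₀)
  have hzc : z - conj z₀ ≠ 0 := by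
    intro h0'
    have h1 : z.im = (conj z₀).im := by rw [sub_eq_zero] at h0'; rw [h0']
    rw [Complex.conj_im] at h1; linarith
  set u : ℂ := (z - z₀) / (z - conj z₀) with hu_def
  have habs : ‖z - z₀‖ < ‖z - conj z₀‖ :=
    abs_sub_lt_abs_sub_conj hz' hz₀'
  have hu : ‖u‖ < 1 := by
    rw [hu_def, norm_div]
    exact (div_lt_one ((norm_nonneg _).trans_lt habs)).2 habs
  have h1u : (1 : ℂ) - u ≠ 0 := by
    intro h'
    have : u = 1 := by linear_combination -h'
    rw [this] at hu; simp at hu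
  have hcu : c u = z := by
    have key : z₀ - u * conj z₀ = z * (1 - u) := by
      rw [hu_def]
      field_simp
      ring
    rw [hc_def]
    show (z₀ - u * conj z₀) / (1 - u) = z
    rw [key, mul_div_assoc, div_self h1u, mul_one]
  have hschwarz := Complex.norm_le_norm_of_mapsTo_ball hdiffh (hmaps.mono_right ball_subset_closedBall) h0 hu
  rw [hh_def] at hschwarz
  simp only [hcu] at hschwarz
  rw [hu_def] at hschwarz
  rw [norm_div, norm_div] at hschwarz
  have hd1 : 0 < ‖g z - conj (g z₀)‖ :=
    (norm_nonneg _).trans_lt (abs_sub_lt_abs_sub_conj (hpos _ hz) hgz₀)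
  have hd2 : 0 < ‖z - conj z₀‖ := (norm_nonneg _).trans_lt habs
  rw [div_le_div_iff₀ hd1 hd2] at hschwarz
  linarith
lemma im_lower_bound {g : ℂ → ℂ} (hg : DifferentiableOn ℂ g UHP)
    (hpos : ∀ z ∈ UHP, 0 < (g z).im) (x : ℝ) {y : ℝ} (hy : 0 < y) (hy1 : y ≤ 1) :
    (g ((x:ℂ) + I)).im * y ≤ 4 * (g ((x:ℂ) + y * I)).im := by
  have hz₀ : ((x:ℂ) + I) ∈ UHP := by simp [UHP]
  have hz : ((x:ℂ) + (y:ℂ) * I) ∈ UHP := by simp [UHP, hy]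
  have hsp := schwarzPick hg hpos hz₀ hz
  set w := g ((x:ℂ) + y * I) with hw_def
  set w₀ := g ((x:ℂ) + I) with hw₀_def
  have him : 0 < w.im := hpos _ hz
  have him₀ : 0 < w₀.im := hpos _ hz₀
  have hD2 : ‖w - conj w₀‖ ^ 2 - ‖w - w₀‖ ^ 2
      = 4 * w.im * w₀.im := sq_sub_sq_abs w w₀
  have hDlb : w.im + w₀.im ≤ ‖w - conj w₀‖ := im_le_abs_sub_conj him.le him₀.le
  have e1 : (x:ℂ) + (y:ℂ) * I - conj ((x:ℂ) + I) = ((y + 1 : ℝ) : ℂ) * I := by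
    rw [map_add, Complex.conj_ofReal, Complex.conj_I]
    push_cast
    ring
  have e2 : (x:ℂ) + (y:ℂ) * I - ((x:ℂ) + I) = ((y - 1 : ℝ) : ℂ) * I := by
    push_cast; ring
  rw [e1, e2, norm_mul, norm_mul, Complex.norm_real, Real.norm_eq_abs, Complex.norm_real, Real.norm_eq_abs, Complex.norm_I,
    mul_one, mul_one, abs_of_pos (by linarith : (0:ℝ) < y + 1),
    abs_of_nonpos (by linarith : y - 1 ≤ 0)] at hsp
  -- hsp : abs (w - w₀) * (y+1) ≤ -(y-1) * abs (w - conj w₀)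
  have hA : 0 ≤ ‖w - w₀‖ := norm_nonneg _
  have hD : 0 ≤ ‖w - conj w₀‖ := norm_nonneg _
  have hsq := mul_self_le_mul_self (by positivity) hsp
  have hsq2 := mul_self_le_mul_self (by positivity) hDlb
  have hD2' : ‖w - conj w₀‖ ^ 2 * (y+1)^2 - ‖w - w₀‖ ^ 2 * (y+1)^2
      = 4 * w.im * w₀.im * (y+1)^2 := by linear_combination (y+1)^2 * hD2
  have step1 : 4 * y * ‖w - conj w₀‖ ^ 2
      ≤ 4 * (w.im * w₀.im) * (y+1)^2 := by nlinarith [hsq, hD2']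
  have step2 : (y+1)^2 ≤ 4 := by nlinarith
  have step3 : y * ‖w - conj w₀‖ ^ 2 ≤ 4 * (w.im * w₀.im) := by
    nlinarith [step1, step2, mul_pos him him₀]
  have step4 : y * ((w.im + w₀.im) * (w.im + w₀.im))
      ≤ y * (‖w - conj w₀‖ * ‖w - conj w₀‖) :=
    mul_le_mul_of_nonneg_left hsq2 hy.le
  have step5 : w₀.im * (w₀.im * y) ≤ w₀.im * (4 * w.im) := by
    nlinarith [step3, step4, mul_pos him him₀, mul_pos hy (mul_pos him him₀),
      mul_pos hy (mul_pos him him), him, him₀, hy]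
  have := le_of_mul_le_mul_left step5 him₀
  linarith

theorem zero_angular_derivative_implies_constant (f : ℂ → ℂ) (x a₀ : ℝ)
    (hf : IsPick f)
    (hlo : NTLittleO (fun z => f z - (a₀ : ℂ)) x 1) :
    ∀ z ∈ UHP, f z = (a₀ : ℂ) := by
  obtain ⟨hdiff, him⟩ := hf
  have hmemUHP : ∀ y : ℝ, 0 < y → ((x:ℂ) + (y:ℂ) * I) ∈ UHP := by
    intro y hy; simp [UHP, hy]
  have hray : Tendsto (fun y : ℝ => (x:ℂ) + (y:ℂ) * I) (𝓝[>] (0:ℝ))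
      (𝓝[ntRegion x 1] (x:ℂ)) := by
    rw [tendsto_nhdsWithin_iff]
    constructor
    · have hcont : Tendsto (fun y : ℝ => (x:ℂ) + (y:ℂ) * I) (𝓝 0)
          (𝓝 ((x:ℂ) + ((0:ℝ):ℂ) * I)) :=
        (continuous_const.add (Complex.continuous_ofReal.mul continuous_const)).tendsto 0
      simp only [Complex.ofReal_zero, zero_mul, add_zero] at hcont
      exact hcont.mono_left nhdsWithin_le_nhds
    · filter_upwards [self_mem_nhdsWithin] with y hy
      have hy' : (0:ℝ) < y := hy
      refine ⟨by simp [hy'], ?_⟩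
      have h1 : (x:ℂ) + (y:ℂ) * I - (x:ℂ) = (y:ℂ) * I := by ring
      rw [h1, norm_mul, Complex.norm_real, Real.norm_eq_abs, Complex.norm_I, mul_one, abs_of_pos hy']
      simp
  have hq : Tendsto (fun y : ℝ => (f ((x:ℂ) + (y:ℂ) * I) - (a₀:ℂ)) / ((y:ℂ) * I))
      (𝓝[>] (0:ℝ)) (𝓝 0) := by
    have h1 := (hlo 1 one_pos).comp hray
    have h2 : ∀ y : ℝ, ((x:ℂ) + (y:ℂ) * I - (x:ℂ)) ^ 1 = (y:ℂ) * I := by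
      intro y; rw [pow_one]; ring
    exact h1.congr fun y => by
      simp only [Function.comp_apply, pow_one, add_sub_cancel_left]
  by_cases hconst : ∃ w, ∀ z ∈ UHP, f z = w
  · obtain ⟨w, hw⟩ := hconst
    have hyI : Tendsto (fun y : ℝ => (y:ℂ) * I) (𝓝[>] (0:ℝ)) (𝓝 0) := by
      have h3 : Tendsto (fun y : ℝ => (y:ℂ) * I) (𝓝 0) (𝓝 (((0:ℝ):ℂ) * I)) :=
        (Complex.continuous_ofReal.mul continuous_const).tendsto 0
      simp only [Complex.ofReal_zero, zero_mul] at h3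
      exact h3.mono_left nhdsWithin_le_nhds
    have hprod : Tendsto
        (fun y : ℝ => ((y:ℂ) * I) * ((f ((x:ℂ) + (y:ℂ) * I) - (a₀:ℂ)) / ((y:ℂ) * I)))
        (𝓝[>] (0:ℝ)) (𝓝 0) := by
      simpa using hyI.mul hq
    have heq : ∀ᶠ (y : ℝ) in 𝓝[>] (0:ℝ),
        ((y:ℂ) * I) * ((f ((x:ℂ) + (y:ℂ) * I) - (a₀:ℂ)) / ((y:ℂ) * I)) = w - (a₀:ℂ) := by
      filter_upwards [self_mem_nhdsWithin] with y hy
      have hy' : (0:ℝ) < y := hy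
      have hy0 : (y:ℂ) * I ≠ 0 :=
        mul_ne_zero (Complex.ofReal_ne_zero.2 hy'.ne') Complex.I_ne_zero
      rw [mul_div_cancel₀ _ hy0, hw _ (hmemUHP y hy)]
    have hlim : Tendsto (fun _ : ℝ => (w - (a₀:ℂ))) (𝓝[>] (0:ℝ)) (𝓝 0) :=
      hprod.congr' (heq.mono fun y h => h)
    have hwa : w - (a₀:ℂ) = 0 := tendsto_nhds_unique tendsto_const_nhds hlim
    intro z hz
    rw [hw z hz, ← sub_eq_zero]
    exact hwa
  · exfalso
    have hopenmap :=
      ((hdiff.analyticOnNhd UHP_isOpen).is_constant_or_isOpen UHP_preconnected).resolve_left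
        hconst
    have hpos : ∀ z ∈ UHP, 0 < (f z).im := by
      intro z hz
      have hopen : IsOpen (f '' UHP) := hopenmap UHP subset_rfl UHP_isOpen
      obtain ⟨ε, hε, hb⟩ := Metric.isOpen_iff.1 hopen (f z) ⟨z, hz, rfl⟩
      have hmem : f z - ((ε/2 : ℝ):ℂ) * I ∈ ball (f z) ε := by
        rw [mem_ball, dist_eq]
        have h4 : f z - ((ε/2 : ℝ):ℂ) * I - f z = -(((ε/2 : ℝ):ℂ) * I) := by ring
        rw [h4, norm_neg, norm_mul, Complex.norm_real, Real.norm_eq_abs, Complex.norm_I, mul_one,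
          abs_of_pos (by linarith)]
        linarith
      obtain ⟨z', hz', hfz'⟩ := hb hmem
      have h1 := him z' hz'
      rw [hfz'] at h1
      simp only [Complex.sub_im, Complex.mul_im, Complex.ofReal_re, Complex.ofReal_im,
        Complex.I_re, Complex.I_im, mul_one, mul_zero, zero_mul, add_zero, zero_add] at h1
      linarith
    have hw₀ : 0 < (f ((x:ℂ) + I)).im := hpos _ (by simp [UHP])
    have hRe : Tendsto (fun y : ℝ => ((f ((x:ℂ) + (y:ℂ) * I) - (a₀:ℂ)) / ((y:ℂ) * I)).re)
        (𝓝[>] (0:ℝ)) (𝓝 0) := by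
      have h5 := (Complex.continuous_re.tendsto 0).comp hq
      exact h5
    have hlb : ∀ᶠ (y : ℝ) in 𝓝[>] (0:ℝ),
        (f ((x:ℂ) + I)).im / 4 ≤ ((f ((x:ℂ) + (y:ℂ) * I) - (a₀:ℂ)) / ((y:ℂ) * I)).re := by
      filter_upwards [Ioc_mem_nhdsGT one_pos] with y hy
      have hy0 : 0 < y := hy.1
      have hre : ((f ((x:ℂ) + (y:ℂ) * I) - (a₀:ℂ)) / ((y:ℂ) * I)).re
          = (f ((x:ℂ) + (y:ℂ) * I)).im / y := by
        rw [Complex.div_re]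
        simp only [Complex.sub_re, Complex.sub_im, Complex.mul_re, Complex.mul_im,
          Complex.ofReal_re, Complex.ofReal_im, Complex.I_re, Complex.I_im,
          Complex.normSq_apply, mul_one, mul_zero, zero_mul, add_zero, zero_add, sub_zero]
        field_simp
        ring
      rw [hre]
      have hib := im_lower_bound hdiff hpos x hy0 hy.2
      rw [div_le_div_iff₀ (by norm_num) hy0]
      linarith
    have hev := hRe.eventually_lt_const
      (show (0:ℝ) < (f ((x:ℂ) + I)).im / 4 by positivity)
    obtain ⟨y, h1, h2⟩ := (hev.and hlb).exists
    linarith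
end
end

section
/- Let x ∈ ℝ, a^{-1} ≤ 0, and a^0,...,a^n ∈ ℝ. There exists f in the Pick class with f(z) = a^{-1}/(z-x) + a^0 + a^1(z-x) + ... + a^n(z-x)^n + o((z-x)^n) nontangentially if and only if a^{-1} ≤ 0 and there exists F in the Pick class with F(z) = a^0 + a^1(z-x) + ... + a^n(z-x)^n + o((z-x)^n) nontangentially. Moreover, any Pick-class f satisfying the first expansion with some real a^{-1} necessarily has a^{-1} ≤ 0, and F(z) = f(z) - a^{-1}/(z-x) is again in the Pick class. -/
open Complex Filter Finset Metric Set

noncomputable section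

lemma normSq_sub_conj (u p : ℂ) :
    normSq (u - p) = normSq (u - (starRingEnd ℂ) p) - 4 * u.im * p.im := by
  simp [normSq_apply, sub_re, sub_im, conj_re, conj_im]; ring

lemma sub_conj_ne {u p : ℂ} (hu : 0 < u.im) (hp : 0 < p.im) :
    u - (starRingEnd ℂ) p ≠ 0 := by
  intro h
  have : (u - (starRingEnd ℂ) p).im = 0 := by rw [h]; simp
  simp [sub_im, conj_im] at this
  linarith

lemma abs_sub_lt {u p : ℂ} (hu : 0 < u.im) (hp : 0 < p.im) :
    ‖u - p‖ < ‖u - (starRingEnd ℂ) p‖ := by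
  have h1 : (‖u - p‖)^2 < (‖u - (starRingEnd ℂ) p‖)^2 := by
    rw [Complex.sq_norm, Complex.sq_norm, normSq_sub_conj]
    nlinarith
  exact lt_of_pow_lt_pow_left₀ 2 (norm_nonneg _) h1

lemma cayley_lt_one {u p : ℂ} (hu : 0 < u.im) (hp : 0 < p.im) :
    ‖(u - p)/(u - (starRingEnd ℂ) p)‖ < 1 := by
  rw [norm_div, div_lt_one]
  · exact abs_sub_lt hu hp
  · exact norm_pos_iff.mpr (sub_conj_ne hu hp)

lemma psi_im_pos {w : ℂ} (hw : 0 < w.im) {ζ : ℂ} (hζ : ζ ∈ ball (0:ℂ) 1) :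
    0 < ((w - (starRingEnd ℂ) w * ζ) / (1 - ζ)).im := by
  have hζ1 : Complex.normSq ζ < 1 := by
    have h0 : ‖ζ‖ < 1 := by
      have := mem_ball_zero_iff.mp hζ; exact this
    rw [← Complex.sq_norm]
    nlinarith [norm_nonneg ζ]
  have hne : (1:ℂ) - ζ ≠ 0 := by
    intro h
    have : ζ = 1 := by linear_combination -h
    rw [this] at hζ1; simp [normSq_apply] at hζ1
  rw [Complex.div_im]
  have hpos : 0 < Complex.normSq (1 - ζ) := normSq_pos.mpr hne
  rw [div_sub_div_same, lt_div_iff₀ hpos, zero_mul]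
  have : (w - (starRingEnd ℂ) w * ζ).im * (1 - ζ).re -
      (w - (starRingEnd ℂ) w * ζ).re * (1 - ζ).im = w.im * (1 - normSq ζ) := by
    simp [sub_im, sub_re, mul_im, mul_re, conj_re, conj_im, normSq_apply]
    ring
  rw [this]
  nlinarith

lemma schwarz_pick {f : ℂ → ℂ} (hd : DifferentiableOn ℂ f UHP)
    (hpos : ∀ z ∈ UHP, 0 < (f z).im) {w z : ℂ} (hw : w ∈ UHP) (hz : z ∈ UHP) :
    z.im * w.im * normSq (f z - (starRingEnd ℂ) (f w)) ≤
      (f z).im * (f w).im * normSq (z - (starRingEnd ℂ) w) := by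
  have hwim : 0 < w.im := hw
  have hzim : 0 < z.im := hz
  have hq : 0 < (f w).im := hpos w hw
  have hfz : 0 < (f z).im := hpos z hz
  set ψ : ℂ → ℂ := fun ζ => (w - (starRingEnd ℂ) w * ζ) / (1 - ζ) with hψdef
  set h : ℂ → ℂ := fun ζ => (f (ψ ζ) - f w) / (f (ψ ζ) - (starRingEnd ℂ) (f w)) with hhdef
  have hne1 : ∀ ζ ∈ ball (0:ℂ) 1, (1:ℂ) - ζ ≠ 0 := by
    intro ζ hζ hc
    have : ζ = 1 := by linear_combination -hc
    rw [this] at hζ; simp at hζ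
  have hmapsψ : MapsTo ψ (ball (0:ℂ) 1) UHP := fun ζ hζ => psi_im_pos hwim hζ
  have hdψ : DifferentiableOn ℂ ψ (ball (0:ℂ) 1) := by
    apply DifferentiableOn.div
    · exact (differentiableOn_const _).sub ((differentiableOn_const _).mul differentiableOn_id)
    · exact (differentiableOn_const _).sub differentiableOn_id
    · exact hne1
  have hdF : DifferentiableOn ℂ (fun ζ => f (ψ ζ)) (ball (0:ℂ) 1) := hd.comp hdψ hmapsψ
  have hdh : DifferentiableOn ℂ h (ball (0:ℂ) 1) := by
    apply (hdF.sub (differentiableOn_const _)).div (hdF.sub (differentiableOn_const _))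
    intro ζ hζ
    exact sub_conj_ne (hpos _ (hmapsψ hζ)) hq
  have hmapsh : MapsTo h (ball (0:ℂ) 1) (ball (0:ℂ) 1) := by
    intro ζ hζ
    rw [mem_ball_zero_iff]
    exact cayley_lt_one (hpos _ (hmapsψ hζ)) hq
  have h0 : h 0 = 0 := by
    have : ψ 0 = w := by simp [hψdef]
    simp [hhdef, this]
  have hzw : z - (starRingEnd ℂ) w ≠ 0 := sub_conj_ne hzim hwim
  set ζz : ℂ := (z - w) / (z - (starRingEnd ℂ) w) with hζzdef
  have hζzball : ζz ∈ ball (0:ℂ) 1 := by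
    rw [mem_ball_zero_iff]
    exact cayley_lt_one hzim hwim
  have hden : (1:ℂ) - ζz ≠ 0 := by
    rw [sub_ne_zero]
    intro hc
    rw [hζzdef, eq_div_iff hzw, one_mul] at hc
    have := Complex.conj_eq_iff_im.mp (sub_right_injective hc)
    linarith
  have hψz : ψ ζz = z := by
    rw [hψdef]
    simp only
    rw [div_eq_iff hden, hζzdef]
    field_simp
    ring
  have key := Complex.norm_le_norm_of_mapsTo_ball hdh (hmapsh.mono_right ball_subset_closedBall) h0
      (mem_ball_zero_iff.mp hζzball)
  rw [hhdef] at key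
  simp only [hψz] at key
  have hfzq : f z - (starRingEnd ℂ) (f w) ≠ 0 := sub_conj_ne hfz hq
  rw [hζzdef, norm_div, norm_div] at key
  have hd1 : 0 < ‖f z - (starRingEnd ℂ) (f w)‖ := norm_pos_iff.mpr hfzq
  have hd2 : 0 < ‖z - (starRingEnd ℂ) w‖ := norm_pos_iff.mpr hzw
  rw [div_le_div_iff₀ hd1 hd2] at key
  have key2 : (‖f z - f w‖ * ‖z - (starRingEnd ℂ) w‖)^2 ≤
      (‖z - w‖ * ‖f z - (starRingEnd ℂ) (f w)‖)^2 :=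
    pow_le_pow_left₀ (by positivity) key 2
  rw [mul_pow, mul_pow, Complex.sq_norm, Complex.sq_norm, Complex.sq_norm, Complex.sq_norm] at key2
  rw [normSq_sub_conj (f z) (f w), normSq_sub_conj z w] at key2
  nlinarith [normSq_nonneg (z - (starRingEnd ℂ) w), normSq_nonneg (f z - (starRingEnd ℂ) (f w))]





lemma ray_mem_UHP (x : ℝ) {y : ℝ} (hy : 0 < y) : (x:ℂ) + Complex.I * y ∈ UHP := by
  simp only [UHP, Set.mem_setOf_eq, Complex.add_im, Complex.ofReal_im, Complex.mul_im,
    Complex.I_re, Complex.I_im, Complex.ofReal_re, Complex.ofReal_im]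
  simpa using hy

lemma ray_tendsto (x : ℝ) : Tendsto (fun y : ℝ => (x:ℂ) + Complex.I * y) (nhdsWithin 0 (Set.Ioi 0))
    (nhdsWithin (x:ℂ) (ntRegion x 1)) := by
  rw [tendsto_nhdsWithin_iff]
  constructor
  · have hcont : Continuous (fun y : ℝ => (x:ℂ) + Complex.I * y) := by continuity
    have h : Tendsto (fun y : ℝ => (x:ℂ) + Complex.I * y) (nhdsWithin (0:ℝ) (Set.Ioi 0))
        (nhds ((x:ℂ) + Complex.I * (0:ℝ))) := (hcont.tendsto 0).mono_left nhdsWithin_le_nhds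
    simpa using h
  · filter_upwards [self_mem_nhdsWithin] with y hy
    have hy' : (0:ℝ) < y := hy
    constructor
    · exact ray_mem_UHP x hy'
    · have h1 : (x:ℂ) + Complex.I * y - (x:ℂ) = Complex.I * y := by ring
      have h2 : ((x:ℂ) + Complex.I * y).im = y := by
        simp [Complex.add_im, Complex.mul_im]
      rw [h1, h2, norm_mul, Complex.norm_I, Complex.norm_real, one_mul, one_mul,
        Real.norm_eq_abs, abs_of_pos hy']

lemma keyA {f : ℂ → ℂ} (x b : ℝ) (n : ℕ) (a : ℕ → ℝ)
    (hlo : NTLittleO (fun z => f z - (b:ℂ)/(z - (x:ℂ)) -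
      ∑ j ∈ Finset.range (n+1), (a j : ℂ) * (z - (x:ℂ))^j) x n) :
    Tendsto (fun y : ℝ => (y:ℂ) * f ((x:ℂ) + Complex.I * y)) (nhdsWithin 0 (Set.Ioi 0))
      (nhds (-Complex.I * b)) := by
  set P : ℂ → ℂ := fun z => ∑ j ∈ Finset.range (n+1), (a j : ℂ) * (z - (x:ℂ))^j with hP
  set q : ℂ → ℂ := fun z => (f z - (b:ℂ)/(z - (x:ℂ)) - P z)/(z - (x:ℂ))^n with hq
  have hqt : Tendsto (fun y : ℝ => q ((x:ℂ) + Complex.I * y)) (nhdsWithin 0 (Set.Ioi 0))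
      (nhds 0) := (hlo 1 one_pos).comp (ray_tendsto x)
  have heq : ∀ y ∈ Set.Ioi (0:ℝ), (y:ℂ) * f ((x:ℂ) + Complex.I*y)
      = ((y:ℂ) * (Complex.I*y)^n) * q ((x:ℂ) + Complex.I*y)
        + (y:ℂ) * P ((x:ℂ)+Complex.I*y) + (-Complex.I*b) := by
    intro y hy
    have hy0 : (y:ℂ) ≠ 0 := by
      exact_mod_cast ne_of_gt (show (0:ℝ) < y from hy)
    have hIy : ((x:ℂ) + Complex.I*y - (x:ℂ)) = Complex.I * y := by ring
    have hIyn : (Complex.I * (y:ℂ))^n ≠ 0 := pow_ne_zero _ (mul_ne_zero Complex.I_ne_zero hy0)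
    have h1 : (Complex.I*(y:ℂ))^n * q ((x:ℂ)+Complex.I*y)
        = f ((x:ℂ)+Complex.I*y) - (b:ℂ)/(Complex.I*y) - P ((x:ℂ)+Complex.I*y) := by
      rw [hq]
      simp only [hIy]
      rw [mul_comm, div_mul_cancel₀ _ hIyn]
    have h2 : (y:ℂ) * ((b:ℂ)/(Complex.I*y)) = -Complex.I*b := by
      rw [mul_div_assoc', div_eq_iff (mul_ne_zero Complex.I_ne_zero hy0)]
      linear_combination ((b:ℂ)*(y:ℂ)) * Complex.I_sq
    have h3 : ((y:ℂ) * (Complex.I*(y:ℂ))^n) * q ((x:ℂ)+Complex.I*y)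
        = (y:ℂ) * ((Complex.I*(y:ℂ))^n * q ((x:ℂ)+Complex.I*y)) := by ring
    rw [h3, h1]
    linear_combination h2
  have hEq : (fun y : ℝ => (y:ℂ) * f ((x:ℂ)+Complex.I*y))
      =ᶠ[nhdsWithin 0 (Set.Ioi 0)]
      (fun y : ℝ => ((y:ℂ) * (Complex.I*y)^n) * q ((x:ℂ)+Complex.I*y)
        + (y:ℂ) * P ((x:ℂ)+Complex.I*y) + (-Complex.I*b)) :=
    eventually_nhdsWithin_of_forall heq
  rw [Filter.tendsto_congr' hEq]
  have t1 : Tendsto (fun y : ℝ => (y:ℂ) * (Complex.I*y)^n) (nhdsWithin 0 (Set.Ioi 0))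
      (nhds 0) := by
    have hc : Continuous (fun y : ℝ => (y:ℂ) * (Complex.I*y)^n) := by continuity
    have h : Tendsto (fun y : ℝ => (y:ℂ) * (Complex.I*y)^n) (nhdsWithin (0:ℝ) (Set.Ioi 0))
        (nhds (((0:ℝ):ℂ) * (Complex.I*((0:ℝ):ℂ))^n)) := (hc.tendsto 0).mono_left nhdsWithin_le_nhds
    simpa using h
  have hPc : Continuous P := by
    rw [hP]
    exact continuous_finset_sum _ (fun j _ => by continuity)
  have t2 : Tendsto (fun y : ℝ => (y:ℂ) * P ((x:ℂ)+Complex.I*y)) (nhdsWithin 0 (Set.Ioi 0))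
      (nhds 0) := by
    have hc : Continuous (fun y : ℝ => (y:ℂ) * P ((x:ℂ)+Complex.I*y)) := by
      apply Continuous.mul
      · continuity
      · exact hPc.comp (by continuity)
    have h : Tendsto (fun y : ℝ => (y:ℂ) * P ((x:ℂ)+Complex.I*y)) (nhdsWithin (0:ℝ) (Set.Ioi 0))
        (nhds (((0:ℝ):ℂ) * P ((x:ℂ)+Complex.I*((0:ℝ):ℂ)))) := (hc.tendsto 0).mono_left nhdsWithin_le_nhds
    have hzero : (((0:ℝ):ℂ) * P ((x:ℂ)+Complex.I*((0:ℝ):ℂ))) = 0 := by simp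
    rwa [hzero] at h
  have tt := ((t1.mul hqt).add t2).add (tendsto_const_nhds (x := -Complex.I*(b:ℂ)))
  simpa using tt

lemma b_nonpos {f : ℂ → ℂ} {x b : ℝ} (hpick : IsPick f)
    (hG : Tendsto (fun y : ℝ => (y:ℂ) * f ((x:ℂ) + Complex.I*y)) (nhdsWithin 0 (Set.Ioi 0))
      (nhds (-Complex.I * b))) : b ≤ 0 := by
  have him : Tendsto (fun y : ℝ => ((y:ℂ) * f ((x:ℂ)+Complex.I*y)).im)
      (nhdsWithin 0 (Set.Ioi 0)) (nhds ((-Complex.I*(b:ℂ)).im)) :=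
    (Complex.continuous_im.tendsto _).comp hG
  have hval : (-Complex.I*(b:ℂ)).im = -b := by simp
  rw [hval] at him
  have hge : ∀ᶠ y : ℝ in nhdsWithin (0:ℝ) (Set.Ioi 0), 0 ≤ ((y:ℂ) * f ((x:ℂ)+Complex.I*y)).im := by
    filter_upwards [self_mem_nhdsWithin] with y hy
    have hy' : (0:ℝ) < y := hy
    have h2 := hpick.2 _ (ray_mem_UHP x hy')
    have h3 : ((y:ℂ) * f ((x:ℂ)+Complex.I*y)).im = y * (f ((x:ℂ)+Complex.I*y)).im := by
      simp [Complex.mul_im]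
    rw [h3]
    exact mul_nonneg hy'.le h2
  have h0 : (0:ℝ) ≤ -b := ge_of_tendsto him hge
  linarith

lemma pick_dichotomy {f : ℂ → ℂ} (hpick : IsPick f) :
    (∀ z ∈ UHP, 0 < (f z).im) ∨ ∃ c : ℂ, ∀ z ∈ UHP, f z = c := by
  by_cases h : ∀ z ∈ UHP, 0 < (f z).im
  · exact Or.inl h
  push_neg at h
  obtain ⟨z0, hz0, him⟩ := h
  right
  have hUopen : IsOpen UHP := isOpen_lt continuous_const Complex.continuous_im
  have hUconn : IsPreconnected UHP := (convex_halfSpace_im_gt (0:ℝ)).isPreconnected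
  set g : ℂ → ℂ := fun z => Complex.exp (Complex.I * f z) with hg
  have hdg : DifferentiableOn ℂ g UHP :=
    ((differentiableOn_const _).mul hpick.1).cexp
  have hnorm : ∀ z ∈ UHP, ‖g z‖ = Real.exp (-(f z).im) := by
    intro z hz
    rw [hg]
    simp only [Complex.norm_exp]
    congr 1
    simp [Complex.mul_re]
  have hmax : IsMaxOn (norm ∘ g) UHP z0 := by
    intro z hz
    show ‖g z‖ ≤ ‖g z0‖
    rw [hnorm z hz, hnorm z0 hz0]
    have h1 : (f z0).im = 0 := le_antisymm him (hpick.2 z0 hz0)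
    rw [h1]
    exact Real.exp_le_exp.mpr (by linarith [hpick.2 z hz])
  have heq := Complex.eqOn_of_isPreconnected_of_isMaxOn_norm hUconn hUopen hdg hz0 hmax
  have him0 : ∀ z ∈ UHP, (f z).im = 0 := by
    intro z hz
    have h1 := hnorm z hz
    have h2 : g z = g z0 := heq hz
    rw [h2, hnorm z0 hz0, le_antisymm him (hpick.2 z0 hz0)] at h1
    have h3 := Real.exp_eq_exp.mp h1
    linarith
  have hA : AnalyticOnNhd ℂ f UHP := hpick.1.analyticOnNhd hUopen
  rcases hA.is_constant_or_isOpen hUconn with ⟨c, hc⟩ | hopen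
  · exact ⟨c, hc⟩
  exfalso
  have hI : Complex.I ∈ UHP := by simp [UHP]
  have himage : IsOpen (f '' UHP) := hopen UHP subset_rfl hUopen
  obtain ⟨r, hr, hball⟩ := Metric.isOpen_iff.mp himage (f Complex.I) ⟨Complex.I, hI, rfl⟩
  have hp : f Complex.I + Complex.I * (r/2 : ℝ) ∈ ball (f Complex.I) r := by
    rw [mem_ball, dist_eq_norm]
    simp only [add_sub_cancel_left]
    rw [norm_mul, Complex.norm_I, one_mul,
      Complex.norm_real, Real.norm_eq_abs]
    rw [abs_of_pos (by linarith)]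
    linarith
  obtain ⟨z, hz, hfz⟩ := hball hp
  have h1 : (f z).im = 0 := him0 z hz
  have h2 : (f Complex.I + Complex.I * (r/2 : ℝ)).im = r/2 := by
    rw [Complex.add_im, him0 _ hI]
    simp [Complex.mul_im]
  rw [hfz, h2] at h1
  linarith

lemma pick_sub_pole {f : ℂ → ℂ} {x b : ℝ} (hpick : IsPick f)
    (hG : Tendsto (fun y : ℝ => (y:ℂ) * f ((x:ℂ) + Complex.I*y)) (nhdsWithin 0 (Set.Ioi 0))
      (nhds (-Complex.I * b))) :
    IsPick (fun z => f z - (b:ℂ)/(z - (x:ℂ))) := by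
  have hb : b ≤ 0 := b_nonpos hpick hG
  have hsub : ∀ z ∈ UHP, z - (x:ℂ) ≠ 0 := by
    intro z hz hc
    have h1 : 0 < z.im := hz
    have h2 : z = (x:ℂ) := sub_eq_zero.mp hc
    rw [h2] at h1
    simp at h1
  have hdiff : DifferentiableOn ℂ (fun z => f z - (b:ℂ)/(z - (x:ℂ))) UHP := by
    apply hpick.1.sub
    exact (differentiableOn_const _).div (differentiableOn_id.sub (differentiableOn_const _)) hsub
  refine ⟨hdiff, ?_⟩
  -- trivial when b = 0
  rcases eq_or_lt_of_le hb with hb0 | hbneg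
  · intro w hw
    simp only [hb0, Complex.ofReal_zero, zero_div, sub_zero]
    exact hpick.2 w hw
  rcases pick_dichotomy hpick with hpos | ⟨c, hc⟩
  · -- main case : Im f > 0 everywhere, b < 0
    intro w hw
    have hwim : 0 < w.im := hw
    have hfw : 0 < (f w).im := hpos w hw
    set G : ℝ → ℂ := fun y => (y:ℂ) * f ((x:ℂ) + Complex.I*y) with hGdef
    set cc : ℂ := (starRingEnd ℂ) (f w) with hcc
    -- pointwise inequality
    have hev : ∀ y ∈ Set.Ioi (0:ℝ),
        w.im * normSq (G y - (y:ℂ) * cc) ≤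
        (G y).im * ((f w).im * normSq ((x:ℂ) + Complex.I*y - (starRingEnd ℂ) w)) := by
      intro y hy
      have hy' : (0:ℝ) < y := hy
      have hz : (x:ℂ) + Complex.I*y ∈ UHP := ray_mem_UHP x hy'
      have sp := schwarz_pick hpick.1 hpos hw hz
      have hzim : ((x:ℂ) + Complex.I*y).im = y := by
        simp [Complex.add_im, Complex.mul_im]
      rw [hzim] at sp
      have hNS : normSq (G y - (y:ℂ) * cc) =
          y^2 * normSq (f ((x:ℂ) + Complex.I*y) - cc) := by
        rw [hGdef]
        simp only
        rw [← mul_sub, normSq_mul, Complex.normSq_ofReal]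
        ring
      have hGim : (G y).im = y * (f ((x:ℂ) + Complex.I*y)).im := by
        rw [hGdef]; simp [Complex.mul_im]
      rw [hNS, hGim]
      nlinarith [normSq_nonneg ((x:ℂ) + Complex.I*y - (starRingEnd ℂ) w),
        normSq_nonneg (f ((x:ℂ) + Complex.I*y) - cc), hfw.le, hwim.le]
    -- limits
    have hyc : Tendsto (fun y : ℝ => (y:ℂ) * cc) (nhdsWithin (0:ℝ) (Set.Ioi 0)) (nhds 0) := by
      have hcont : Continuous (fun y : ℝ => (y:ℂ) * cc) := by continuity
      have h : Tendsto (fun y : ℝ => (y:ℂ) * cc) (nhdsWithin (0:ℝ) (Set.Ioi 0))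
          (nhds (((0:ℝ):ℂ) * cc)) := (hcont.tendsto 0).mono_left nhdsWithin_le_nhds
      simpa using h
    have hL : Tendsto (fun y : ℝ => w.im * normSq (G y - (y:ℂ) * cc))
        (nhdsWithin (0:ℝ) (Set.Ioi 0)) (nhds (w.im * (b*b))) := by
      have h1 := hG.sub hyc
      have h2 := (Complex.continuous_normSq.tendsto _).comp h1
      have h3 := h2.const_mul w.im
      have hval : normSq (-Complex.I * (b:ℂ) - 0) = b*b := by
        simp [Complex.normSq_apply]
      rw [hval] at h3
      exact h3
    have hR : Tendsto (fun y : ℝ => (G y).im *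
        ((f w).im * normSq ((x:ℂ) + Complex.I*y - (starRingEnd ℂ) w)))
        (nhdsWithin (0:ℝ) (Set.Ioi 0))
        (nhds ((-b) * ((f w).im * normSq ((x:ℂ) - (starRingEnd ℂ) w)))) := by
      have h1 : Tendsto (fun y : ℝ => (G y).im) (nhdsWithin (0:ℝ) (Set.Ioi 0)) (nhds (-b)) := by
        have := (Complex.continuous_im.tendsto _).comp hG
        simpa [Function.comp_def] using this
      have h2 : Tendsto (fun y : ℝ => (f w).im * normSq ((x:ℂ) + Complex.I*y - (starRingEnd ℂ) w))
          (nhdsWithin (0:ℝ) (Set.Ioi 0))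
          (nhds ((f w).im * normSq ((x:ℂ) - (starRingEnd ℂ) w))) := by
        have hcont : Continuous (fun y : ℝ =>
            (f w).im * normSq ((x:ℂ) + Complex.I*y - (starRingEnd ℂ) w)) := by
          apply continuous_const.mul
          exact Complex.continuous_normSq.comp (by continuity)
        have h := (hcont.tendsto 0).mono_left (nhdsWithin_le_nhds (s := Set.Ioi (0:ℝ)))
        simpa using h
      exact h1.mul h2
    have key : w.im * (b*b) ≤ (-b) * ((f w).im * normSq ((x:ℂ) - (starRingEnd ℂ) w)) :=
      le_of_tendsto_of_tendsto hL hR (eventually_nhdsWithin_of_forall hev)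
    -- conclude
    have hNSconj : normSq ((x:ℂ) - (starRingEnd ℂ) w) = normSq (w - (x:ℂ)) := by
      simp [Complex.normSq_apply, Complex.sub_re, Complex.sub_im]
      ring
    rw [hNSconj] at key
    have hNSpos : 0 < normSq (w - (x:ℂ)) := normSq_pos.mpr (by
      intro hcon
      exact hsub w hw (by rw [← hcon]))
    rw [Complex.sub_im, Complex.div_im]
    simp only [Complex.ofReal_im, Complex.ofReal_re, zero_mul, zero_div, zero_sub,
      Complex.sub_im, sub_zero]
    rw [sub_neg_eq_add]
    rw [div_eq_mul_inv]
    have hfin : 0 ≤ (f w).im * normSq (w - (x:ℂ)) + b * w.im := by nlinarith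
    have h9 : 0 < (normSq (w - (x:ℂ)))⁻¹ := inv_pos.mpr hNSpos
    have hinv : normSq (w - (x:ℂ)) * (normSq (w - (x:ℂ)))⁻¹ = 1 := mul_inv_cancel₀ hNSpos.ne'
    nlinarith [mul_nonneg hfin h9.le, hinv]
  · -- constant case: b = 0 contradiction with b < 0
    exfalso
    have hc' : ∀ᶠ y : ℝ in nhdsWithin (0:ℝ) (Set.Ioi 0),
        (y:ℂ) * f ((x:ℂ) + Complex.I*y) = (y:ℂ) * c := by
      filter_upwards [self_mem_nhdsWithin] with y hy
      rw [hc _ (ray_mem_UHP x hy)]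
    have h1 : Tendsto (fun y : ℝ => (y:ℂ) * c) (nhdsWithin (0:ℝ) (Set.Ioi 0)) (nhds 0) := by
      have hcont : Continuous (fun y : ℝ => (y:ℂ) * c) := by continuity
      have h := (hcont.tendsto 0).mono_left (nhdsWithin_le_nhds (s := Set.Ioi (0:ℝ)))
      simpa using h
    have h2 : Tendsto (fun y : ℝ => (y:ℂ) * f ((x:ℂ) + Complex.I*y))
        (nhdsWithin (0:ℝ) (Set.Ioi 0)) (nhds 0) := Tendsto.congr' (EventuallyEq.symm hc') h1
    have huniq : -Complex.I * (b:ℂ) = 0 := tendsto_nhds_unique hG h2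
    have : (-Complex.I * (b:ℂ)).im = 0 := by rw [huniq]; simp
    simp at this
    linarith


theorem pole_term_reduction (x : ℝ) (n : ℕ) (am1 : ℝ) (ham1 : am1 ≤ 0) (a : ℕ → ℝ) :
    ((∃ f : ℂ → ℂ, IsPick f ∧
        NTLittleO (fun z =>
          f z - (am1 : ℂ) / (z - (x : ℂ)) -
            ∑ j ∈ Finset.range (n + 1), (a j : ℂ) * (z - (x : ℂ)) ^ j) x n) ↔
      (am1 ≤ 0 ∧ ∃ F : ℂ → ℂ, IsPick F ∧
        NTLittleO (fun z =>
          F z - ∑ j ∈ Finset.range (n + 1), (a j : ℂ) * (z - (x : ℂ)) ^ j) x n)) ∧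
    (∀ (b : ℝ) (f : ℂ → ℂ), IsPick f →
      NTLittleO (fun z =>
        f z - (b : ℂ) / (z - (x : ℂ)) -
          ∑ j ∈ Finset.range (n + 1), (a j : ℂ) * (z - (x : ℂ)) ^ j) x n →
      b ≤ 0 ∧ IsPick (fun z => f z - (b : ℂ) / (z - (x : ℂ)))) := by
  have part2 : ∀ (b : ℝ) (f : ℂ → ℂ), IsPick f →
      NTLittleO (fun z =>
        f z - (b : ℂ) / (z - (x : ℂ)) -
          ∑ j ∈ Finset.range (n + 1), (a j : ℂ) * (z - (x : ℂ)) ^ j) x n →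
      b ≤ 0 ∧ IsPick (fun z => f z - (b : ℂ) / (z - (x : ℂ))) := by
    intro b f hpick hlo
    have hG := keyA x b n a hlo
    exact ⟨b_nonpos hpick hG, pick_sub_pole hpick hG⟩
  refine ⟨⟨?_, ?_⟩, part2⟩
  · rintro ⟨f, hf, hlo⟩
    exact ⟨ham1, fun z => f z - (am1 : ℂ) / (z - (x:ℂ)), (part2 am1 f hf hlo).2, hlo⟩
  · rintro ⟨-, F, hF, hlo⟩
    have hsub : ∀ z ∈ UHP, z - (x:ℂ) ≠ 0 := by
      intro z hz hc
      have h1 : 0 < z.im := hz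
      have h2 : z = (x:ℂ) := sub_eq_zero.mp hc
      rw [h2] at h1
      simp at h1
    refine ⟨fun z => F z + (am1 : ℂ) / (z - (x:ℂ)), ⟨?_, ?_⟩, ?_⟩
    · exact hF.1.add ((differentiableOn_const _).div
        (differentiableOn_id.sub (differentiableOn_const _)) hsub)
    · intro z hz
      have h1 := hF.2 z hz
      have hzim : 0 < z.im := hz
      have h2 : 0 ≤ ((am1:ℂ)/(z - (x:ℂ))).im := by
        rw [Complex.div_im]
        simp only [Complex.ofReal_im, Complex.ofReal_re, zero_mul, zero_div, zero_sub,
          Complex.sub_im, sub_zero]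
        have hNS : 0 ≤ normSq (z - (x:ℂ)) := normSq_nonneg _
        have h3 : am1 * z.im ≤ 0 := mul_nonpos_of_nonpos_of_nonneg ham1 hzim.le
        have h4 : am1 * z.im / normSq (z - (x:ℂ)) ≤ 0 := div_nonpos_iff.mpr (Or.inr ⟨h3, hNS⟩)
        linarith
      rw [Complex.add_im]
      exact add_nonneg h1 h2
    · intro K hK
      exact Tendsto.congr (fun z => by ring) (hlo K hK)
end
end
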